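/- Let A be a real symmetric positive semidefinite n×n matrix with eigenvalues λ_1 > λ_2 ≥ … ≥ λ_n ≥ 0 (top eigenvalue simple, λ_1 > 0) and orthonormal eigenvectors v_1, …, v_n. Let x_0 be a unit vector with Γ := |⟨v_1, x_0⟩| > 0, and let y_k = A^k x_0 / ‖A^k x_0‖ be the normalized power iterate. Then for every natural number k, the Rayleigh quotient satisfies 0 ≤ λ_1 − ⟨y_k, A y_k⟩ ≤ (λ_1 − λ_n) · ((1 − Γ²)/Γ²) · (λ_2/λ_1)^{2k}. -/

import Mathlib

open scoped RealInnerProductSpace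

open Finset in
private lemma stmt_14_aux (n : ℕ) (A : Matrix (Fin n) (Fin n) ℝ)
    (lam : Fin n → ℝ) (v : Fin n → EuclideanSpace ℝ (Fin n))
    (horth : Orthonormal ℝ v)
    (heig : ∀ k, A.mulVec (WithLp.equiv 2 (Fin n → ℝ) (v k)) =
      lam k • WithLp.equiv 2 (Fin n → ℝ) (v k))
    (hdesc : ∀ k l : Fin n, k ≤ l → lam l ≤ lam k)
    (hnonneg : ∀ k, 0 ≤ lam k)
    (i0 i1 iN : Fin n) (h0 : (i0 : ℕ) = 0) (h1 : (i1 : ℕ) = 1) (hNN : (iN : ℕ) = n - 1)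
    (hpos : 0 < lam i0)
    (x0 : EuclideanSpace ℝ (Fin n)) (hx0 : ‖x0‖ = 1)
    (Γ : ℝ) (hΓdef : Γ = |⟪v i0, x0⟫|) (hΓ : 0 < Γ)
    (k : ℕ) (xk yk : EuclideanSpace ℝ (Fin n))
    (hxk : xk = (WithLp.equiv 2 (Fin n → ℝ)).symm
      ((A ^ k).mulVec (WithLp.equiv 2 (Fin n → ℝ) x0)))
    (hyk : yk = ‖xk‖⁻¹ • xk) :
    0 ≤ lam i0 -
        ⟪yk, (WithLp.equiv 2 (Fin n → ℝ)).symm (A.mulVec (WithLp.equiv 2 (Fin n → ℝ) yk))⟫ ∧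
      lam i0 -
          ⟪yk, (WithLp.equiv 2 (Fin n → ℝ)).symm (A.mulVec (WithLp.equiv 2 (Fin n → ℝ) yk))⟫ ≤
        (lam i0 - lam iN) * ((1 - Γ ^ 2) / Γ ^ 2) * (lam i1 / lam i0) ^ (2 * k) := by
  classical
  set c : Fin n → ℝ := fun i => ⟪v i, x0⟫ with hc
  haveI : Nonempty (Fin n) := ⟨i0⟩
  have hcard : Fintype.card (Fin n) = Module.finrank ℝ (EuclideanSpace ℝ (Fin n)) := by
    simp
  have hspan : ⊤ ≤ Submodule.span ℝ (Set.range v) := by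
    rw [← coe_basisOfOrthonormalOfCardEqFinrank horth hcard]
    exact (basisOfOrthonormalOfCardEqFinrank horth hcard).span_eq.ge
  let b : OrthonormalBasis (Fin n) ℝ (EuclideanSpace ℝ (Fin n)) :=
    OrthonormalBasis.mk horth hspan
  have hb : ⇑b = v := OrthonormalBasis.coe_mk _ _
  have hx0sum : x0 = ∑ i, c i • v i := by
    conv_lhs => rw [← b.sum_repr' x0]
    simp [hb, hc]
  have heig' : ∀ i, Matrix.toEuclideanLin A (v i) = lam i • v i := by
    intro i
    rw [Matrix.toEuclideanLin_apply]
    exact congrArg (WithLp.toLp 2) (heig i)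
  have hTpow : ∀ m : ℕ, Matrix.toEuclideanLin (A ^ m) x0 = ∑ i, (lam i ^ m * c i) • v i := by
    intro m
    induction m with
    | zero =>
      simpa [Matrix.toEuclideanLin_apply, Matrix.one_mulVec] using hx0sum
    | succ m ih =>
      have hstep : Matrix.toEuclideanLin (A ^ (m + 1)) x0
          = Matrix.toEuclideanLin A (Matrix.toEuclideanLin (A ^ m) x0) := by
        rw [pow_succ']
        simp [Matrix.toEuclideanLin_apply, Matrix.mulVec_mulVec]
      rw [hstep, ih, map_sum]
      refine Finset.sum_congr rfl fun i _ => ?_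
      rw [map_smul, heig' i, smul_smul]
      congr 1
      ring
  have hxk' : xk = ∑ i, (lam i ^ k * c i) • v i := by
    rw [hxk]
    exact hTpow k
  have hTxk : Matrix.toEuclideanLin A xk = ∑ i, (lam i * (lam i ^ k * c i)) • v i := by
    rw [hxk', map_sum]
    refine Finset.sum_congr rfl fun i _ => ?_
    rw [map_smul, heig' i, smul_smul, mul_comm]
  have hinner_xx : ⟪xk, xk⟫ = ∑ i, (lam i ^ k * c i) ^ 2 := by
    rw [hxk', horth.inner_sum]
    simp [sq]
  have hinner_xTx : ⟪xk, Matrix.toEuclideanLin A xk⟫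
      = ∑ i, lam i * (lam i ^ k * c i) ^ 2 := by
    nth_rewrite 1 [hxk']
    rw [hTxk, horth.inner_sum]
    refine Finset.sum_congr rfl fun i _ => ?_
    simp [sq]
    ring
  have hParseval : ∑ i, c i ^ 2 = 1 := by
    have hxx : ⟪x0, x0⟫ = ∑ i, c i * c i := by
      rw [hx0sum, horth.inner_sum]
      simp
    rw [real_inner_self_eq_norm_sq, hx0] at hxx
    simp only [one_pow] at hxx
    simpa [sq] using hxx.symm
  have hΓ2 : Γ ^ 2 = c i0 ^ 2 := by
    rw [hΓdef]
    exact sq_abs _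
  have hi0le : ∀ i : Fin n, i0 ≤ i := by
    intro i
    rw [Fin.le_def, h0]
    exact Nat.zero_le _
  have hS_ge : lam i0 ^ (2 * k) * Γ ^ 2 ≤ ∑ i, (lam i ^ k * c i) ^ 2 := by
    have he : lam i0 ^ (2 * k) * Γ ^ 2 = (lam i0 ^ k * c i0) ^ 2 := by
      rw [hΓ2, pow_mul']
      ring
    rw [he]
    exact Finset.single_le_sum (f := fun i => (lam i ^ k * c i) ^ 2)
        (fun i _ => sq_nonneg _) (mem_univ i0)
  have hdpos : 0 < lam i0 ^ (2 * k) * Γ ^ 2 :=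
    mul_pos (pow_pos hpos _) (pow_pos hΓ _)
  have hSpos : 0 < ∑ i, (lam i ^ k * c i) ^ 2 := lt_of_lt_of_le hdpos hS_ge
  have hnorm : ‖xk‖ ^ 2 = ∑ i, (lam i ^ k * c i) ^ 2 := by
    rw [← real_inner_self_eq_norm_sq, hinner_xx]
  have hnz : ‖xk‖ ≠ 0 := by
    intro h
    rw [h] at hnorm
    simp at hnorm
    linarith
  have hR : ⟪yk, (WithLp.equiv 2 (Fin n → ℝ)).symm (A.mulVec (WithLp.equiv 2 (Fin n → ℝ) yk))⟫
      = (∑ i, lam i * (lam i ^ k * c i) ^ 2) / (∑ i, (lam i ^ k * c i) ^ 2) := by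
    have hT : (WithLp.equiv 2 (Fin n → ℝ)).symm (A.mulVec (WithLp.equiv 2 (Fin n → ℝ) yk))
        = Matrix.toEuclideanLin A yk := rfl
    rw [hT, hyk, map_smul, real_inner_smul_left, real_inner_smul_right, hinner_xTx, ← hnorm]
    rw [pow_two]
    ring
  have hkey : lam i0 - (∑ i, lam i * (lam i ^ k * c i) ^ 2) / (∑ i, (lam i ^ k * c i) ^ 2)
      = (∑ i, (lam i0 - lam i) * (lam i ^ k * c i) ^ 2) / (∑ i, (lam i ^ k * c i) ^ 2) := by
    rw [eq_div_iff hSpos.ne', sub_mul, div_mul_cancel₀ _ hSpos.ne', Finset.mul_sum,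
      ← Finset.sum_sub_distrib]
    exact Finset.sum_congr rfl fun i _ => by ring
  have hNnonneg : 0 ≤ ∑ i, (lam i0 - lam i) * (lam i ^ k * c i) ^ 2 := by
    refine Finset.sum_nonneg fun i _ => mul_nonneg ?_ (sq_nonneg _)
    have := hdesc i0 i (hi0le i)
    linarith
  have hsum_erase : ∑ i ∈ univ.erase i0, c i ^ 2 = 1 - Γ ^ 2 := by
    rw [Finset.sum_erase_eq_sub (mem_univ i0), hParseval, hΓ2]
  have hgap0 : 0 ≤ 1 - Γ ^ 2 := by
    rw [← hsum_erase]
    exact Finset.sum_nonneg fun i _ => sq_nonneg _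
  have h0N : 0 ≤ lam i0 - lam iN := by
    have := hdesc i0 iN (hi0le iN)
    linarith
  have hNle : (∑ i, (lam i0 - lam i) * (lam i ^ k * c i) ^ 2)
      ≤ (lam i0 - lam iN) * lam i1 ^ (2 * k) * (1 - Γ ^ 2) := by
    have hsplit : (∑ i, (lam i0 - lam i) * (lam i ^ k * c i) ^ 2)
        = ∑ i ∈ univ.erase i0, (lam i0 - lam i) * (lam i ^ k * c i) ^ 2 :=
      (Finset.sum_erase _ (by simp)).symm
    rw [hsplit, ← hsum_erase, Finset.mul_sum]
    refine Finset.sum_le_sum fun i hi => ?_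
    have hiN : i ≤ iN := by
      rw [Fin.le_def, hNN]
      omega
    have hi1 : i1 ≤ i := by
      have hne : (i : ℕ) ≠ 0 := by
        intro h
        exact (Finset.mem_erase.mp hi).1 (Fin.ext (by rw [h, h0]))
      rw [Fin.le_def, h1]
      omega
    have e1 : (lam i ^ k * c i) ^ 2 = lam i ^ (2 * k) * c i ^ 2 := by
      rw [pow_mul']
      ring
    rw [e1]
    have hle1 : lam i0 - lam i ≤ lam i0 - lam iN := by
      have := hdesc i iN hiN
      linarith
    have hle2 : lam i ^ (2 * k) ≤ lam i1 ^ (2 * k) :=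
      pow_le_pow_left₀ (hnonneg i) (hdesc i1 i hi1) _
    calc (lam i0 - lam i) * (lam i ^ (2 * k) * c i ^ 2)
        ≤ (lam i0 - lam iN) * (lam i ^ (2 * k) * c i ^ 2) :=
          mul_le_mul_of_nonneg_right hle1
            (mul_nonneg (pow_nonneg (hnonneg i) _) (sq_nonneg _))
      _ ≤ (lam i0 - lam iN) * (lam i1 ^ (2 * k) * c i ^ 2) :=
          mul_le_mul_of_nonneg_left
            (mul_le_mul_of_nonneg_right hle2 (sq_nonneg _)) h0N
      _ = (lam i0 - lam iN) * lam i1 ^ (2 * k) * c i ^ 2 := by ring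
  rw [hR, hkey]
  constructor
  · exact div_nonneg hNnonneg hSpos.le
  · calc (∑ i, (lam i0 - lam i) * (lam i ^ k * c i) ^ 2) / (∑ i, (lam i ^ k * c i) ^ 2)
        ≤ ((lam i0 - lam iN) * lam i1 ^ (2 * k) * (1 - Γ ^ 2))
            / (lam i0 ^ (2 * k) * Γ ^ 2) :=
          div_le_div₀
            (mul_nonneg (mul_nonneg h0N (pow_nonneg (hnonneg i1) _)) hgap0)
            hNle hdpos hS_ge
      _ = (lam i0 - lam iN) * ((1 - Γ ^ 2) / Γ ^ 2) * (lam i1 / lam i0) ^ (2 * k) := by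
          rw [div_pow]
          field_simp

/-- Rayleigh-quotient error of the power method: with the notation of the power iteration
(`A` symmetric PSD, eigenvalues `λ_1 > λ_2 ≥ … ≥ λ_n ≥ 0`, orthonormal eigenvectors `v_k`,
unit vector `x_0` with `Γ = |⟨v_1, x_0⟩| > 0`, normalized iterate `y_k`), one has
`0 ≤ λ_1 − ⟨y_k, A y_k⟩ ≤ (λ_1 − λ_n)((1 − Γ²)/Γ²)(λ_2/λ_1)^(2k)`. -/
theorem stmt_14 (n : ℕ) (hn : 2 ≤ n) (A : Matrix (Fin n) (Fin n) ℝ)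
    (hsym : A.IsSymm) (hpsd : A.PosSemidef)
    (lam : Fin n → ℝ) (v : Fin n → EuclideanSpace ℝ (Fin n))
    (horth : Orthonormal ℝ v)
    (heig : ∀ k, A.mulVec (WithLp.equiv 2 (Fin n → ℝ) (v k)) =
      lam k • WithLp.equiv 2 (Fin n → ℝ) (v k))
    (hdesc : ∀ k l : Fin n, k ≤ l → lam l ≤ lam k)
    (hnonneg : ∀ k, 0 ≤ lam k)
    (hgap : lam ⟨1, by omega⟩ < lam ⟨0, by omega⟩)
    (hpos : 0 < lam ⟨0, by omega⟩)
    (x0 : EuclideanSpace ℝ (Fin n)) (hx0 : ‖x0‖ = 1)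
    (Γ : ℝ) (hΓdef : Γ = |⟪v ⟨0, by omega⟩, x0⟫|) (hΓ : 0 < Γ)
    (k : ℕ) (xk yk : EuclideanSpace ℝ (Fin n))
    (hxk : xk = (WithLp.equiv 2 (Fin n → ℝ)).symm
      ((A ^ k).mulVec (WithLp.equiv 2 (Fin n → ℝ) x0)))
    (hyk : yk = ‖xk‖⁻¹ • xk) :
    0 ≤ lam ⟨0, by omega⟩ -
        ⟪yk, (WithLp.equiv 2 (Fin n → ℝ)).symm (A.mulVec (WithLp.equiv 2 (Fin n → ℝ) yk))⟫ ∧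
      lam ⟨0, by omega⟩ -
          ⟪yk, (WithLp.equiv 2 (Fin n → ℝ)).symm (A.mulVec (WithLp.equiv 2 (Fin n → ℝ) yk))⟫ ≤
        (lam ⟨0, by omega⟩ - lam ⟨n - 1, by omega⟩) * ((1 - Γ ^ 2) / Γ ^ 2) *
          (lam ⟨1, by omega⟩ / lam ⟨0, by omega⟩) ^ (2 * k) := by
  exact stmt_14_aux n A lam v horth heig hdesc hnonneg
    ⟨0, by omega⟩ ⟨1, by omega⟩ ⟨n - 1, by omega⟩ rfl rfl rfl hpos
    x0 hx0 Γ hΓdef hΓ k xk yk hxk hyk
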